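/- Let T ≥ 2 and define f̄^{nc}: ℝ^T → ℝ by f̄^{nc}(x) = -Ψ(1)Φ(x₁) + Σ_{i=2}^{T}[Ψ(-x_{i-1})Φ(-x_i) - Ψ(x_{i-1})Φ(x_i)]. Then f̄^{nc} is a zero-chain: for every 2 ≤ i ≤ T and every x ∈ ℝ^T with x_{i-1} = 0 and x_i = 0, the partial derivative ∂f̄^{nc}/∂x_i(x) = 0; consequently, if x_j = 0 for all j ≥ i, then ∂f̄^{nc}/∂x_j(x) = 0 for all j ≥ i+1, i.e., supp(x) ⊆ {1,…,i-1} implies supp(∇f̄^{nc}(x)) ⊆ {1,…,i}. -/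

import Mathlib

open Topology Filter


/-- `Ψ(x) = 0` for `x ≤ 1/2`, `exp(1 - 1/(2x-1)²)` for `x > 1/2`. -/
noncomputable def Psi (x : ℝ) : ℝ :=
  if x ≤ 1 / 2 then 0 else Real.exp (1 - 1 / (2 * x - 1) ^ 2)

/-- `Φ(x) = √e · ∫_{-∞}^x e^{-t²/2} dt`. -/
noncomputable def Phi (x : ℝ) : ℝ :=
  Real.sqrt (Real.exp 1) * ∫ t in Set.Iic x, Real.exp (-t ^ 2 / 2)

/-- Carmon et al.'s unscaled nonconvex hard instance
`f̄^{nc}(x) = -Ψ(1)Φ(x₁) + Σ_{i=2}^{T} [Ψ(-x_{i-1})Φ(-x_i) - Ψ(x_{i-1})Φ(x_i)]`.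
In Lean's 0-indexing, `x j` is the math variable `x_{j+1}`. -/
noncomputable def fnc (T : ℕ) (hT : 2 ≤ T) (x : Fin T → ℝ) : ℝ :=
  -Psi 1 * Phi (x ⟨0, by omega⟩)
    + ∑ j : Fin (T - 1),
        (Psi (-x ⟨(j : ℕ), by have := j.isLt; omega⟩)
            * Phi (-x ⟨(j : ℕ) + 1, by have := j.isLt; omega⟩)
          - Psi (x ⟨(j : ℕ), by have := j.isLt; omega⟩)
            * Phi (x ⟨(j : ℕ) + 1, by have := j.isLt; omega⟩))

lemma psi_zero {t : ℝ} (ht : t ≤ 1/2) : Psi t = 0 := if_pos ht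

set_option maxHeartbeats 2000000 in
lemma key (T : ℕ) (hT : 2 ≤ T) (x : Fin T → ℝ) (i : Fin T) (hi : 1 ≤ (i : ℕ))
    (h1 : x ⟨(i : ℕ) - 1, by have := i.isLt; omega⟩ = 0) (h2 : x i = 0) :
    fderiv ℝ (fnc T hT) x (Pi.single i 1) = 0 := by
  set g : (Fin T → ℝ) → ℝ := fun y => fnc T hT (Function.update y i 0) with hg
  have hev : ∀ (k : Fin T), x k = 0 → ∀ᶠ y in 𝓝 x, |y k| < 1/2 := by
    intro k hk
    have hc : ContinuousAt (fun y : Fin T → ℝ => |y k|) x :=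
      (continuous_abs.comp (continuous_apply k)).continuousAt
    have h0 : |x k| < 1/2 := by rw [hk]; norm_num
    exact hc (Iio_mem_nhds h0)
  have heq : fnc T hT =ᶠ[𝓝 x] g := by
    filter_upwards [hev ⟨(i : ℕ) - 1, by omega⟩ h1, hev i h2] with y hyA hyB
    show fnc T hT y = fnc T hT (Function.update y i 0)
    unfold fnc
    congr 1
    · have hne : (⟨0, by omega⟩ : Fin T) ≠ i := by
        intro h; simp [Fin.ext_iff] at h; omega
      rw [Function.update_of_ne hne]
    · apply Finset.sum_congr rfl
      intro j _
      have hjlt := j.isLt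
      by_cases hji : (j : ℕ) + 1 = (i : ℕ)
      · have hane : (⟨(j : ℕ), by omega⟩ : Fin T) ≠ i := by
          intro h; simp [Fin.ext_iff] at h; omega
        have ha : (⟨(j : ℕ), by omega⟩ : Fin T) = (⟨(i : ℕ) - 1, by omega⟩ : Fin T) := by
          simp [Fin.ext_iff]; omega
        have hyv : y (⟨(j : ℕ), by omega⟩ : Fin T) = y ⟨(i : ℕ) - 1, by omega⟩ := by rw [ha]
        rw [Function.update_of_ne hane, hyv]
        have hy := abs_lt.mp hyA
        have e1 : Psi (-y ⟨(i : ℕ) - 1, by omega⟩) = 0 := psi_zero (by linarith [hy.1])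
        have e2 : Psi (y ⟨(i : ℕ) - 1, by omega⟩) = 0 := psi_zero (by linarith [hy.2])
        rw [e1, e2]
        ring
      · by_cases hji' : (j : ℕ) = (i : ℕ)
        · have ha : (⟨(j : ℕ), by omega⟩ : Fin T) = i := by
            simp [Fin.ext_iff]; omega
          have hbne : (⟨(j : ℕ) + 1, by omega⟩ : Fin T) ≠ i := by
            intro h; simp [Fin.ext_iff] at h; omega
          have hupd : Function.update y i 0 (⟨(j : ℕ), by omega⟩ : Fin T) = 0 := by
            rw [ha, Function.update_self]
          have hyv : y (⟨(j : ℕ), by omega⟩ : Fin T) = y i := by rw [ha]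
          rw [Function.update_of_ne hbne, hupd, hyv]
          have hy := abs_lt.mp hyB
          have e1 : Psi (-y i) = 0 := psi_zero (by linarith [hy.1])
          have e2 : Psi (y i) = 0 := psi_zero (by linarith [hy.2])
          have e3 : Psi (-(0:ℝ)) = 0 := psi_zero (by norm_num)
          have e4 : Psi (0:ℝ) = 0 := psi_zero (by norm_num)
          rw [e1, e2, e3, e4]
        · have hane : (⟨(j : ℕ), by omega⟩ : Fin T) ≠ i := by
            intro h; simp [Fin.ext_iff] at h; omega
          have hbne : (⟨(j : ℕ) + 1, by omega⟩ : Fin T) ≠ i := by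
            intro h; simp [Fin.ext_iff] at h; omega
          rw [Function.update_of_ne hane, Function.update_of_ne hbne]
  rw [heq.fderiv_eq]
  by_cases hd : DifferentiableAt ℝ g x
  · have hline : HasDerivAt (fun t : ℝ => x + t • (Pi.single i 1 : Fin T → ℝ))
        (Pi.single i 1 : Fin T → ℝ) 0 := by
      simpa using ((hasDerivAt_id (0:ℝ)).smul_const (Pi.single i 1 : Fin T → ℝ)).const_add x
    have hx0 : x + (0:ℝ) • (Pi.single i 1 : Fin T → ℝ) = x := by simp
    have hgd : HasFDerivAt g (fderiv ℝ g x)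
        (x + (0:ℝ) • (Pi.single i 1 : Fin T → ℝ)) := by
      rw [hx0]; exact hd.hasFDerivAt
    have hcomp := hgd.comp_hasDerivAt 0 hline
    have hconst : (g ∘ fun t : ℝ => x + t • (Pi.single i 1 : Fin T → ℝ)) = fun _ => g x := by
      funext t
      show fnc T hT _ = fnc T hT _
      congr 1
      funext k
      by_cases hk : k = i
      · subst hk; simp
      · simp [Function.update_of_ne hk, Pi.single_eq_of_ne hk]
    rw [hconst] at hcomp
    exact hcomp.unique (hasDerivAt_const 0 (g x))
  · rw [fderiv_zero_of_not_differentiableAt hd]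
    rfl

/-- `f̄^{nc}` is a zero-chain: whenever `x_{i-1} = x_i = 0`, the `i`-th
partial derivative vanishes; consequently `supp(x) ⊆ {1,…,i-1}` implies
`supp(∇f̄^{nc}(x)) ⊆ {1,…,i}`. -/
theorem stmt_18 (T : ℕ) (hT : 2 ≤ T) :
    (∀ (x : Fin T → ℝ) (i : Fin T) (hi : 1 ≤ (i : ℕ)),
      x ⟨(i : ℕ) - 1, by omega⟩ = 0 → x i = 0 →
      fderiv ℝ (fnc T hT) x (Pi.single i 1) = 0) ∧
    (∀ (x : Fin T → ℝ) (i : ℕ),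
      (∀ j : Fin T, i ≤ (j : ℕ) → x j = 0) →
      ∀ j : Fin T, i < (j : ℕ) → fderiv ℝ (fnc T hT) x (Pi.single j 1) = 0) := by
  refine ⟨fun x i hi h1 h2 => key T hT x i hi h1 h2, fun x i hx j hj => ?_⟩
  have hj1 : 1 ≤ (j : ℕ) := by omega
  exact key T hT x j hj1
    (hx ⟨(j : ℕ) - 1, by omega⟩ (by show i ≤ (j : ℕ) - 1; omega))
    (hx j (by omega))
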